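/- Let X ⊂ ℝ^d be relatively separated, s > d, and H a Hilbert space. If A = [A_{k,l}]_{k,l∈X} is a B(H)-valued matrix with ‖A‖_{J_s} := sup_{k,l∈X} ‖A_{k,l}‖(1+|k−l|)^s < ∞, then A defines a bounded operator on ℓ^1(X;H) with ‖A‖_{B(ℓ^1)} ≤ C‖A‖_{J_s} for a constant C depending only on X and s. -/

import Mathlib

open scoped BigOperators

noncomputable section

abbrev E (d : ℕ) := EuclideanSpace ℝ (Fin d)

/-- `X ⊂ ℝ^d` is relatively separated: the number of points of `X` in any
translated unit cube is uniformly bounded. -/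
def RelSep {d : ℕ} (X : Set (E d)) : Prop :=
  ∃ N : ℕ, ∀ x : E d,
    (X ∩ {y | ∀ i, x i ≤ y i ∧ y i ≤ x i + 1}).Finite ∧
    (X ∩ {y | ∀ i, x i ≤ y i ∧ y i ≤ x i + 1}).ncard ≤ N

/-- Coordinate bound in Euclidean space. -/
lemma abs_coord_le_norm {d : ℕ} (t : E d) (i : Fin d) : |t i| ≤ ‖t‖ := by
  rw [EuclideanSpace.norm_eq]
  have h1 : |t i| = Real.sqrt (‖t i‖ ^ 2) := by
    rw [Real.sqrt_sq_eq_abs, Real.norm_eq_abs, abs_abs]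
  rw [h1]
  apply Real.sqrt_le_sqrt
  exact Finset.single_le_sum (f := fun j => ‖t j‖ ^ 2) (fun j _ => sq_nonneg _)
    (Finset.mem_univ i)

/-- One-dimensional summability. -/
lemma sum1d {p : ℝ} (hp : 1 < p) :
    Summable (fun m : ℤ => ((1 : ℝ) + |(m : ℝ)|) ^ (-p)) := by
  have h : Summable (fun n : ℤ => 1 / |(n : ℝ) + 0| ^ p) :=
    (Real.summable_one_div_int_add_rpow 0 p).mpr hp
  apply Summable.of_norm_bounded_eventually h
  have hfin : ({0} : Set ℤ).Finite := Set.finite_singleton _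
  apply Set.Finite.subset hfin
  intro n hn
  simp only [Set.mem_setOf_eq] at hn
  by_contra hn0
  apply hn
  have hne : (n : ℝ) ≠ 0 := by
    simpa using fun h => hn0 (by exact_mod_cast h)
  have habs : (0 : ℝ) < |(n : ℝ)| := abs_pos.mpr hne
  have h1 : ((1 : ℝ) + |(n : ℝ)|) ^ (-p) ≤ |(n : ℝ)| ^ (-p) := by
    apply Real.rpow_le_rpow_of_nonpos habs (by linarith) (by linarith)
  simp only [Set.mem_setOf_eq]
  rw [Real.norm_eq_abs, abs_of_nonneg (Real.rpow_nonneg (by positivity) _)]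
  rw [add_zero, one_div, ← Real.rpow_neg (abs_nonneg _)]
  exact h1

/-- Summability of products over `Fin d → ℤ`. -/
lemma sumPi {f : ℤ → ℝ} (h0 : ∀ m, 0 ≤ f m) (hf : Summable f) :
    ∀ d : ℕ, Summable (fun n : Fin d → ℤ => ∏ i, f (n i)) := by
  intro d
  induction d with
  | zero =>
    haveI : Subsingleton (Fin 0 → ℤ) := ⟨fun a b => funext fun i => i.elim0⟩
    haveI : Finite (Fin 0 → ℤ) := Finite.of_subsingleton
    exact Summable.of_finite
  | succ d ih =>
    have h2 : Summable (fun p : ℤ × (Fin d → ℤ) => f p.1 * ∏ i, f (p.2 i)) := by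
      apply Summable.mul_of_nonneg hf ih
      · intro m; exact h0 m
      · intro n; exact Finset.prod_nonneg fun i _ => h0 _
    let e : ℤ × (Fin d → ℤ) ≃ (Fin (d + 1) → ℤ) := Fin.consEquiv (fun _ => ℤ)
    have h3 : Summable ((fun n : Fin (d + 1) → ℤ => ∏ i, f (n i)) ∘ e) := by
      apply h2.congr
      intro p
      simp only [Function.comp_apply]
      have he : (e p : Fin (d + 1) → ℤ) = Fin.cons p.1 p.2 := rfl
      rw [he, Fin.prod_univ_succ]
      simp
    exact e.summable_iff.mp h3

/-- The key Schur-type column bound. -/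
lemma key {d : ℕ} (X : Set (E d)) (hX : RelSep X) (s : ℝ) (hs : (d : ℝ) < s) :
    ∃ C0 > (0 : ℝ), ∀ l : E d,
      Summable (fun k : X => ((1 : ℝ) + ‖(k : E d) - l‖) ^ (-s)) ∧
      ∑' k : X, ((1 : ℝ) + ‖(k : E d) - l‖) ^ (-s) ≤ C0 := by
  obtain ⟨N, hN⟩ := hX
  have hs0 : 0 < s := lt_of_le_of_lt (Nat.cast_nonneg d) hs
  rcases Nat.eq_zero_or_pos d with hd | hd
  · -- degenerate case d = 0
    subst hd
    refine ⟨N + 1, by positivity, fun l => ?_⟩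
    have hcube : {y : E 0 | ∀ i, (0 : E 0) i ≤ y i ∧ y i ≤ (0 : E 0) i + 1} = Set.univ := by
      ext y; simp only [Set.mem_setOf_eq, Set.mem_univ, iff_true]; intro i; exact i.elim0
    have hXfin : X.Finite := by
      have := (hN 0).1; rwa [hcube, Set.inter_univ] at this
    have hXcard : X.ncard ≤ N := by
      have := (hN 0).2; rwa [hcube, Set.inter_univ] at this
    haveI := hXfin.fintype
    haveI : Subsingleton (E 0) := ⟨fun a b => PiLp.ext fun i => i.elim0⟩
    have hone : ∀ k : X, ((1 : ℝ) + ‖(k : E 0) - l‖) ^ (-s) = 1 := by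
      intro k
      have : (k : E 0) - l = 0 := Subsingleton.elim _ _
      rw [this]
      simp
    constructor
    · exact Summable.of_finite
    · have hcard : (Fintype.card X : ℝ) ≤ N := by
        have : Fintype.card X = X.ncard := by
          rw [Set.ncard_eq_toFinset_card' X, Set.toFinset_card]
        rw [this]; exact_mod_cast hXcard
      calc ∑' k : X, ((1 : ℝ) + ‖(k : E 0) - l‖) ^ (-s)
          = ∑' _ : X, (1 : ℝ) := by exact tsum_congr hone
        _ = (Fintype.card X : ℝ) := by rw [tsum_const]; simp
        _ ≤ N := hcard
        _ ≤ N + 1 := by linarith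
  · -- main case 0 < d
    have hd0 : (0 : ℝ) < d := by exact_mod_cast hd
    set p : ℝ := s / d with hpdef
    have hp : 1 < p := (one_lt_div hd0).mpr hs
    have h1 := sum1d hp
    have hPi := sumPi (fun m => Real.rpow_nonneg (by positivity) _) h1 d
    set gd : (Fin d → ℤ) → ℝ := fun n => ∏ i, ((1 : ℝ) + |((n i : ℤ) : ℝ)|) ^ (-p) with hgd
    have hgd_nonneg : ∀ n, 0 ≤ gd n := fun n =>
      Finset.prod_nonneg fun i _ => Real.rpow_nonneg (by positivity) _
    set T : ℝ := ∑' n : Fin d → ℤ, gd n with hT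
    have hT0 : 0 ≤ T := tsum_nonneg hgd_nonneg
    -- pointwise bound
    have hpoint : ∀ t : E d, ((1 : ℝ) + ‖t‖) ^ (-s) ≤
        2 ^ s * ∏ i, ((1 : ℝ) + |((⌊t i⌋ : ℤ) : ℝ)|) ^ (-p) := by
      intro t
      have ha : (0 : ℝ) < 1 + ‖t‖ := by positivity
      set a : ℝ := 1 + ‖t‖ with hadef
      have hfac : ∀ i : Fin d, (1 : ℝ) + |((⌊t i⌋ : ℤ) : ℝ)| ≤ 2 * a := by
        intro i
        have h1 : ((⌊t i⌋ : ℤ) : ℝ) ≤ t i := Int.floor_le _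
        have h2 : t i - 1 < ((⌊t i⌋ : ℤ) : ℝ) := Int.sub_one_lt_floor _
        have h3 : |t i| ≤ ‖t‖ := abs_coord_le_norm t i
        have h4 : |((⌊t i⌋ : ℤ) : ℝ)| ≤ |t i| + 1 := by
          rw [abs_le]
          constructor
          · have := neg_abs_le (t i); linarith
          · have := le_abs_self (t i); linarith
        have h5 := norm_nonneg t
        rw [hadef]; linarith
      have hfacpos : ∀ i : Fin d, (0 : ℝ) < 1 + |((⌊t i⌋ : ℤ) : ℝ)| := by
        intro i; positivity
      have hprod : (∏ i, ((1 : ℝ) + |((⌊t i⌋ : ℤ) : ℝ)|)) ≤ (2 * a) ^ d := by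
        calc (∏ i, ((1 : ℝ) + |((⌊t i⌋ : ℤ) : ℝ)|))
            ≤ ∏ _i : Fin d, (2 * a) :=
              Finset.prod_le_prod (fun i _ => (hfacpos i).le) (fun i _ => hfac i)
          _ = (2 * a) ^ d := by rw [Finset.prod_const, Finset.card_univ, Fintype.card_fin]
      have hprodpos : (0 : ℝ) < ∏ i, ((1 : ℝ) + |((⌊t i⌋ : ℤ) : ℝ)|) :=
        Finset.prod_pos fun i _ => hfacpos i
      have hstep1 : ((2 * a) ^ d : ℝ) ^ (-p) ≤
          (∏ i, ((1 : ℝ) + |((⌊t i⌋ : ℤ) : ℝ)|)) ^ (-p) :=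
        Real.rpow_le_rpow_of_nonpos hprodpos hprod (by linarith)
      have hstep2 : ((2 * a) ^ d : ℝ) ^ (-p) = (2 * a) ^ (-s) := by
        rw [← Real.rpow_natCast (2 * a) d, ← Real.rpow_mul (by positivity)]
        congr 1
        field_simp [hpdef]
        rw [hpdef]; field_simp
      have hstep3 : (∏ i, ((1 : ℝ) + |((⌊t i⌋ : ℤ) : ℝ)|) ^ (-p)) =
          (∏ i, ((1 : ℝ) + |((⌊t i⌋ : ℤ) : ℝ)|)) ^ (-p) :=
        Real.finset_prod_rpow _ _ (fun i _ => (hfacpos i).le) _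
      have hmul : (2 * a) ^ (-s) = 2 ^ (-s) * a ^ (-s) :=
        Real.mul_rpow (by norm_num) (by positivity)
      have h2s : (0 : ℝ) < 2 ^ s := Real.rpow_pos_of_pos (by norm_num) s
      have hinv : (2 : ℝ) ^ s * 2 ^ (-s) = 1 := by
        rw [← Real.rpow_add (by norm_num)]; simp
      calc a ^ (-s) = 2 ^ s * (2 ^ (-s) * a ^ (-s)) := by
            rw [← mul_assoc, hinv, one_mul]
        _ = 2 ^ s * (2 * a) ^ (-s) := by rw [hmul]
        _ = 2 ^ s * ((2 * a) ^ d : ℝ) ^ (-p) := by rw [hstep2]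
        _ ≤ 2 ^ s * (∏ i, ((1 : ℝ) + |((⌊t i⌋ : ℤ) : ℝ)|)) ^ (-p) := by
            exact mul_le_mul_of_nonneg_left hstep1 h2s.le
        _ = 2 ^ s * ∏ i, ((1 : ℝ) + |((⌊t i⌋ : ℤ) : ℝ)|) ^ (-p) := by rw [hstep3]
    have h2s : (0 : ℝ) < 2 ^ s := Real.rpow_pos_of_pos (by norm_num) s
    refine ⟨(N : ℝ) * 2 ^ s * T + 1, by positivity, fun l => ?_⟩
    classical
    set φ : X → (Fin d → ℤ) := fun k => fun i => ⌊(k : E d) i - l i⌋ with hφ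
    -- pointwise bound in terms of φ
    have hptk : ∀ k : X, ((1 : ℝ) + ‖(k : E d) - l‖) ^ (-s) ≤ 2 ^ s * gd (φ k) := by
      intro k
      have := hpoint ((k : E d) - l)
      have hsub : ∀ i : Fin d, ((k : E d) - l) i = (k : E d) i - l i := fun i => rfl
      simpa only [hsub] using this
    -- fiber bound
    have hfiber : ∀ (u : Finset X) (n : Fin d → ℤ),
        (u.filter (fun k => φ k = n)).card ≤ N := by
      intro u n
      set x : E d := WithLp.toLp 2 (fun i => l i + (n i : ℝ) : Fin d → ℝ) with hx
      obtain ⟨hfin, hcard⟩ := hN x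
      have hmap : ∀ k ∈ u.filter (fun k => φ k = n),
          (k : E d) ∈ hfin.toFinset := by
        intro k hk
        rw [Finset.mem_filter] at hk
        rw [Set.Finite.mem_toFinset]
        refine ⟨k.2, fun i => ?_⟩
        have hki : ⌊(k : E d) i - l i⌋ = n i := congrFun hk.2 i
        have h1 : ((n i : ℤ) : ℝ) ≤ (k : E d) i - l i := by
          rw [← hki]; exact Int.floor_le _
        have h2 : (k : E d) i - l i < ((n i : ℤ) : ℝ) + 1 := by
          rw [← hki]; exact Int.lt_floor_add_one _
        constructor
        · show x i ≤ (k : E d) i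
          have : x i = l i + (n i : ℝ) := rfl
          rw [this]; linarith
        · show (k : E d) i ≤ x i + 1
          have : x i = l i + (n i : ℝ) := rfl
          rw [this]; linarith
      have hinj : Set.InjOn (fun k : X => (k : E d))
          (u.filter (fun k => φ k = n)) := fun a _ b _ h => Subtype.ext h
      have := Finset.card_le_card_of_injOn _ hmap hinj
      calc (u.filter (fun k => φ k = n)).card ≤ hfin.toFinset.card := this
        _ = (X ∩ {y | ∀ i, x i ≤ y i ∧ y i ≤ x i + 1}).ncard := by
            rw [Set.ncard_eq_toFinset_card _ hfin]
        _ ≤ N := hcard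
    -- partial sum bound
    have hbound : ∀ u : Finset X,
        ∑ k ∈ u, ((1 : ℝ) + ‖(k : E d) - l‖) ^ (-s) ≤ (N : ℝ) * 2 ^ s * T := by
      intro u
      calc ∑ k ∈ u, ((1 : ℝ) + ‖(k : E d) - l‖) ^ (-s)
          ≤ ∑ k ∈ u, 2 ^ s * gd (φ k) := Finset.sum_le_sum fun k _ => hptk k
        _ = 2 ^ s * ∑ k ∈ u, gd (φ k) := by rw [Finset.mul_sum]
        _ = 2 ^ s * ∑ n ∈ u.image φ, (u.filter (fun k => φ k = n)).card • gd n := by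
            rw [Finset.sum_comp]
        _ ≤ 2 ^ s * ∑ n ∈ u.image φ, (N : ℝ) * gd n := by
            apply mul_le_mul_of_nonneg_left _ h2s.le
            apply Finset.sum_le_sum
            intro n hn
            rw [nsmul_eq_mul]
            exact mul_le_mul_of_nonneg_right
              (by exact_mod_cast hfiber u n) (hgd_nonneg n)
        _ = 2 ^ s * ((N : ℝ) * ∑ n ∈ u.image φ, gd n) := by
            simp [Finset.mul_sum]
        _ ≤ 2 ^ s * ((N : ℝ) * T) := by
            apply mul_le_mul_of_nonneg_left _ h2s.le
            apply mul_le_mul_of_nonneg_left _ (Nat.cast_nonneg N)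
            exact Summable.sum_le_tsum _ (fun n _ => hgd_nonneg n) hPi
        _ = (N : ℝ) * 2 ^ s * T := by ring
    have hsummable : Summable (fun k : X => ((1 : ℝ) + ‖(k : E d) - l‖) ^ (-s)) :=
      summable_of_sum_le (fun k => Real.rpow_nonneg (by positivity) _) hbound
    refine ⟨hsummable, ?_⟩
    have := Summable.tsum_le_of_sum_le hsummable hbound
    linarith

theorem stmt3 {d : ℕ} (X : Set (E d)) (hX : RelSep X) (s : ℝ) (hs : (d : ℝ) < s)
    (H : Type*) [NormedAddCommGroup H] [InnerProductSpace ℂ H] [CompleteSpace H] :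
    ∃ C > (0 : ℝ), ∀ (A : X → X → H →L[ℂ] H) (M : ℝ),
      (∀ k l : X, ‖A k l‖ * (1 + ‖(k : E d) - (l : E d)‖) ^ s ≤ M) →
      ∀ g : X → H, Summable (fun l : X => ‖g l‖) →
        (∀ k : X, Summable (fun l : X => A k l (g l))) ∧
        Summable (fun k : X => ‖∑' l : X, A k l (g l)‖) ∧
        ∑' k : X, ‖∑' l : X, A k l (g l)‖ ≤ C * M * ∑' l : X, ‖g l‖ := by
  obtain ⟨C0, hC0pos, hC0⟩ := key X hX s hs
  refine ⟨C0, hC0pos, fun A M hM g hg => ?_⟩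
  by_cases hempty : IsEmpty X
  · refine ⟨fun k => isEmptyElim k, Summable.of_finite, ?_⟩
    have hz : ∀ f : X → ℝ, ∑' k : X, f k = 0 := by
      intro f
      rw [tsum_eq_sum (s := (∅ : Finset X)) (fun b _ => isEmptyElim b)]
      simp
    rw [hz, hz]
    simp
  · rw [not_isEmpty_iff] at hempty
    obtain ⟨k0⟩ := hempty
    have hM0 : 0 ≤ M := by
      have h1 := hM k0 k0
      have h2 : (0 : ℝ) ≤ ‖A k0 k0‖ * (1 + ‖(k0 : E d) - (k0 : E d)‖) ^ s := by
        apply mul_nonneg (norm_nonneg _)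
        exact Real.rpow_nonneg (by positivity) _
      linarith
    have hApos : ∀ k : E d, (0 : ℝ) < 1 + ‖k‖ := fun k => by positivity
    -- operator norm bound
    have hA : ∀ k l : X, ‖A k l‖ ≤ M * (1 + ‖(k : E d) - (l : E d)‖) ^ (-s) := by
      intro k l
      have hb := hApos ((k : E d) - (l : E d))
      have hbs : (0 : ℝ) < (1 + ‖(k : E d) - (l : E d)‖) ^ s :=
        Real.rpow_pos_of_pos hb s
      rw [Real.rpow_neg hb.le, ← div_eq_mul_inv, le_div_iff₀ hbs]
      exact hM k l
    have hAle : ∀ k l : X, ‖A k l‖ ≤ M := by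
      intro k l
      have h1 := hA k l
      have h2 : (1 + ‖(k : E d) - (l : E d)‖) ^ (-s) ≤ 1 := by
        apply Real.rpow_le_one_of_one_le_of_nonpos
        · have := norm_nonneg ((k : E d) - (l : E d)); linarith
        · have hs0 : 0 < s := lt_of_le_of_lt (Nat.cast_nonneg d) hs; linarith
      calc ‖A k l‖ ≤ M * (1 + ‖(k : E d) - (l : E d)‖) ^ (-s) := h1
        _ ≤ M * 1 := mul_le_mul_of_nonneg_left h2 hM0
        _ = M := mul_one M
    -- termwise norm bounds
    set c : X → X → ℝ :=
      fun k l => M * (1 + ‖(k : E d) - (l : E d)‖) ^ (-s) * ‖g l‖ with hc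
    have hc_nonneg : ∀ k l, 0 ≤ c k l := fun k l =>
      mul_nonneg (mul_nonneg hM0 (Real.rpow_nonneg (hApos _).le _)) (norm_nonneg _)
    have hnorm_le : ∀ k l : X, ‖A k l (g l)‖ ≤ c k l := by
      intro k l
      calc ‖A k l (g l)‖ ≤ ‖A k l‖ * ‖g l‖ := ContinuousLinearMap.le_opNorm _ _
        _ ≤ M * (1 + ‖(k : E d) - (l : E d)‖) ^ (-s) * ‖g l‖ :=
            mul_le_mul_of_nonneg_right (hA k l) (norm_nonneg _)
    have hcle : ∀ k l : X, c k l ≤ M * ‖g l‖ := by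
      intro k l
      have h2 : (1 + ‖(k : E d) - (l : E d)‖) ^ (-s) ≤ 1 := by
        apply Real.rpow_le_one_of_one_le_of_nonpos
        · have := norm_nonneg ((k : E d) - (l : E d)); linarith
        · have hs0 : 0 < s := lt_of_le_of_lt (Nat.cast_nonneg d) hs; linarith
      calc c k l ≤ M * 1 * ‖g l‖ := by
            apply mul_le_mul_of_nonneg_right _ (norm_nonneg _)
            exact mul_le_mul_of_nonneg_left h2 hM0
        _ = M * ‖g l‖ := by ring
    have hck : ∀ k : X, Summable (c k ·) := by
      intro k
      apply Summable.of_nonneg_of_le (hc_nonneg k) (hcle k)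
      exact hg.mul_left M
    have hnorms : ∀ k : X, Summable (fun l : X => ‖A k l (g l)‖) := by
      intro k
      exact Summable.of_nonneg_of_le (fun l => norm_nonneg _)
        (hnorm_le k) (hck k)
    have hrow : ∀ k : X, Summable (fun l : X => A k l (g l)) :=
      fun k => (hnorms k).of_norm
    refine ⟨hrow, ?_, ?_⟩
    all_goals {
      have hkey : ∀ u : Finset X,
          ∑ k ∈ u, ‖∑' l : X, A k l (g l)‖ ≤ C0 * M * ∑' l : X, ‖g l‖ := by
        intro u
        have step1 : ∀ k : X, ‖∑' l : X, A k l (g l)‖ ≤ ∑' l : X, c k l := by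
          intro k
          calc ‖∑' l : X, A k l (g l)‖ ≤ ∑' l : X, ‖A k l (g l)‖ :=
              norm_tsum_le_tsum_norm (hnorms k)
            _ ≤ ∑' l : X, c k l := Summable.tsum_le_tsum (hnorm_le k) (hnorms k) (hck k)
        have step2 : ∑ k ∈ u, ∑' l : X, c k l = ∑' l : X, ∑ k ∈ u, c k l :=
          (Summable.tsum_finsetSum (fun k _ => hck k)).symm
        have step3 : ∀ l : X, ∑ k ∈ u, c k l ≤ C0 * M * ‖g l‖ := by
          intro l
          have hkl := hC0 (l : E d)
          calc ∑ k ∈ u, c k l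
              = M * ‖g l‖ * ∑ k ∈ u, (1 + ‖(k : E d) - (l : E d)‖) ^ (-s) := by
                rw [Finset.mul_sum]; apply Finset.sum_congr rfl; intro k _; ring
            _ ≤ M * ‖g l‖ * C0 := by
                apply mul_le_mul_of_nonneg_left _ (mul_nonneg hM0 (norm_nonneg _))
                exact le_trans (Summable.sum_le_tsum u
                  (fun k _ => Real.rpow_nonneg (hApos _).le _) hkl.1) hkl.2
            _ = C0 * M * ‖g l‖ := by ring
        have hsum_l : Summable (fun l : X => ∑ k ∈ u, c k l) :=
          summable_sum (fun k _ => hck k)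
        calc ∑ k ∈ u, ‖∑' l : X, A k l (g l)‖
            ≤ ∑ k ∈ u, ∑' l : X, c k l := Finset.sum_le_sum fun k _ => step1 k
          _ = ∑' l : X, ∑ k ∈ u, c k l := step2
          _ ≤ ∑' l : X, C0 * M * ‖g l‖ :=
              Summable.tsum_le_tsum step3 hsum_l (hg.mul_left _)
          _ = C0 * M * ∑' l : X, ‖g l‖ := tsum_mul_left
      first
      | exact summable_of_sum_le (fun k => norm_nonneg _) hkey
      | exact Summable.tsum_le_of_sum_le
          (summable_of_sum_le (fun k => norm_nonneg _) hkey) hkey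
    }
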